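/- For every prime power q, there exists a simple bipartite graph on 2(q² + q + 1) vertices (with both parts of size q² + q + 1) that is (q + 1)-regular and contains no cycle of length 4. -/

import Mathlib

open SimpleGraph

/-- `G` contains a cycle of length `k` as a subgraph. -/
def ContainsCycleLen {V : Type*} (G : SimpleGraph V) (k : ℕ) : Prop :=
  ∃ (u : V) (w : G.Walk u u), w.IsCycle ∧ w.length = k

/-- `H` is a Hamiltonian path of the complete graph on `Fin n`:
it is the path graph on `n` vertices up to a relabeling of the vertices. -/
def IsHamPathGraph {n : ℕ} (H : SimpleGraph (Fin n)) : Prop :=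
  ∃ σ : Equiv.Perm (Fin n), ∀ a b, H.Adj a b ↔ (pathGraph n).Adj (σ a) (σ b)

/-- The maximum size of a family of Hamiltonian paths of `K_n` that are
pairwise `C_k`-creating. -/
noncomputable def Hnum (n k : ℕ) : ℕ :=
  sSup {m | ∃ F : Finset (SimpleGraph (Fin n)), F.card = m ∧
    (∀ G ∈ F, IsHamPathGraph G) ∧
    ∀ G₁ ∈ F, ∀ G₂ ∈ F, G₁ ≠ G₂ → ContainsCycleLen (G₁ ⊔ G₂) k}

/-- `H` is a perfect matching (as a graph): every vertex has a unique neighbor. -/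
def IsPMGraph {V : Type*} (H : SimpleGraph V) : Prop :=
  ∀ v : V, ∃! w : V, H.Adj v w

/-- The maximum size of a family of perfect matchings of `K_n` that are
pairwise `C_k`-creating. -/
noncomputable def Mnum (n k : ℕ) : ℕ :=
  sSup {m | ∃ F : Finset (SimpleGraph (Fin n)), F.card = m ∧
    (∀ G ∈ F, IsPMGraph G) ∧
    ∀ G₁ ∈ F, ∀ G₂ ∈ F, G₁ ≠ G₂ → ContainsCycleLen (G₁ ⊔ G₂) k}

open Configuration Projectivization
open scoped LinearAlgebra.Projectivization

open scoped LinearAlgebra.Projectivization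

-- fiber of mk over p is equivalent to Kˣ
noncomputable def fiberEquiv (K : Type*) [Field K] (p : ℙ K (Fin 3 → K)) :
    Kˣ ≃ {v : {v : Fin 3 → K // v ≠ 0} // Projectivization.mk K v.1 v.2 = p} := by
  refine Equiv.ofBijective
    (fun c => ⟨⟨(c : K) • p.rep, smul_ne_zero c.ne_zero p.rep_nonzero⟩, ?_⟩) ⟨?_, ?_⟩
  · conv_rhs => rw [← p.mk_rep]
    exact (mk_eq_mk_iff K _ _ _ p.rep_nonzero).mpr ⟨c, rfl⟩
  · intro c c' h
    simp only [Subtype.mk_eq_mk] at h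
    exact Units.ext (smul_left_injective K p.rep_nonzero h)
  · rintro ⟨⟨w, hw⟩, hv⟩
    rw [← p.mk_rep, mk_eq_mk_iff] at hv
    obtain ⟨a, ha⟩ := hv
    exact ⟨a, Subtype.ext (Subtype.ext ha)⟩

lemma card_proj_mul (K : Type*) [Field K] [Finite K] :
    Nat.card (ℙ K (Fin 3 → K)) * (Nat.card K - 1) = Nat.card K ^ 3 - 1 := by
  have e := (Equiv.sigmaFiberEquiv
    (fun v : {v : Fin 3 → K // v ≠ 0} => Projectivization.mk K v.1 v.2))
  have e2 := (Equiv.sigmaCongrRight (fun p => (fiberEquiv K p))).trans e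
  have e3 := ((Equiv.sigmaEquivProd (ℙ K (Fin 3 → K)) Kˣ).symm.trans e2)
  have h := Nat.card_congr e3
  rw [Nat.card_prod, Nat.card_units] at h
  rw [h]
  have : Nat.card {v : Fin 3 → K // v ≠ 0} = Nat.card (Fin 3 → K) - 1 := by
    cases nonempty_fintype K
    classical
    simp only [Nat.card_eq_fintype_card]
    rw [Fintype.card_subtype_compl (fun v : Fin 3 → K => v = 0),
      Fintype.card_subtype_eq (0 : Fin 3 → K)]
  rw [this, Nat.card_fun]
  simp [Nat.card_eq_fintype_card]

/-- Bipartite graph on `α ⊕ α` from a relation. -/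
def bipGraph {α : Type*} (r : α → α → Prop) : SimpleGraph (α ⊕ α) where
  Adj x y := (∃ a b, r a b ∧ x = .inl a ∧ y = .inr b) ∨
    (∃ a b, r a b ∧ x = .inr b ∧ y = .inl a)
  symm := by constructor; rintro x y (⟨a, b, h, rfl, rfl⟩ | ⟨a, b, h, rfl, rfl⟩)
             · exact Or.inr ⟨a, b, h, rfl, rfl⟩
             · exact Or.inl ⟨a, b, h, rfl, rfl⟩
  loopless := by constructor; rintro x (⟨a, b, h, rfl, hx⟩ | ⟨a, b, h, rfl, hx⟩) <;> simp at hx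

@[simp] lemma bipGraph_adj_ll {α : Type*} {r : α → α → Prop} (a b : α) :
    ¬ (bipGraph r).Adj (.inl a) (.inl b) := by
  rintro (⟨x, y, h, h1, h2⟩ | ⟨x, y, h, h1, h2⟩) <;> simp_all

@[simp] lemma bipGraph_adj_rr {α : Type*} {r : α → α → Prop} (a b : α) :
    ¬ (bipGraph r).Adj (.inr a) (.inr b) := by
  rintro (⟨x, y, h, h1, h2⟩ | ⟨x, y, h, h1, h2⟩) <;> simp_all

@[simp] lemma bipGraph_adj_lr {α : Type*} {r : α → α → Prop} (a b : α) :
    (bipGraph r).Adj (.inl a) (.inr b) ↔ r a b := by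
  constructor
  · rintro (⟨x, y, h, h1, h2⟩ | ⟨x, y, h, h1, h2⟩) <;> simp_all
  · exact fun h => Or.inl ⟨a, b, h, rfl, rfl⟩

@[simp] lemma bipGraph_adj_rl {α : Type*} {r : α → α → Prop} (a b : α) :
    (bipGraph r).Adj (.inr a) (.inl b) ↔ r b a := by
  constructor
  · rintro (⟨x, y, h, h1, h2⟩ | ⟨x, y, h, h1, h2⟩) <;> simp_all
  · exact fun h => Or.inr ⟨b, a, h, rfl, rfl⟩

lemma nat_aux {a q : ℕ} (h2 : 2 ≤ q) (h : a * (q - 1) = q ^ 3 - 1) : a = q ^ 2 + q + 1 := by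
  obtain ⟨m, rfl⟩ := Nat.exists_eq_add_of_le h2
  have h1 : (2 + m) - 1 = m + 1 := by omega
  have h3 : ((2 + m) ^ 2 + (2 + m) + 1) * (m + 1) = (2 + m) ^ 3 - 1 := by
    have : ((2 + m) ^ 2 + (2 + m) + 1) * (m + 1) + 1 = (2 + m) ^ 3 := by ring
    omega
  rw [h1, ← h3] at h
  exact Nat.eq_of_mul_eq_mul_right (by omega) h

theorem helper (K : Type) [Field K] [Finite K] :
    ∃ G : SimpleGraph (Fin (Nat.card K ^ 2 + Nat.card K + 1) ⊕
        Fin (Nat.card K ^ 2 + Nat.card K + 1)),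
      (∀ i j, ¬G.Adj (Sum.inl i) (Sum.inl j)) ∧
      (∀ i j, ¬G.Adj (Sum.inr i) (Sum.inr j)) ∧
      (∀ v, (G.neighborSet v).ncard = Nat.card K + 1) ∧
      ¬ContainsCycleLen G 4 := by
  classical
  cases nonempty_fintype K
  set q := Nat.card K with hqdef
  have hq2 : 2 ≤ q := by
    rw [hqdef, Nat.card_eq_fintype_card]
    exact Fintype.one_lt_card
  set Pl := ℙ K (Fin 3 → K) with hPl
  haveI : Finite Pl := Quotient.finite _
  have hcard : Nat.card Pl = q ^ 2 + q + 1 := nat_aux hq2 (card_proj_mul K)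
  cases nonempty_fintype Pl
  have horder : ProjectivePlane.order Pl Pl = q := by
    have h := ProjectivePlane.card_points Pl Pl
    rw [← Nat.card_eq_fintype_card, hcard] at h
    set o := ProjectivePlane.order Pl Pl
    rcases lt_trichotomy o q with hlt | he | hgt
    · nlinarith
    · exact he
    · nlinarith
  have hline : ∀ p : Pl, lineCount Pl p = q + 1 := fun p => by
    rw [ProjectivePlane.lineCount_eq, horder]
  have hpoint : ∀ l : Pl, pointCount Pl l = q + 1 := fun l => by
    rw [ProjectivePlane.pointCount_eq, horder]
  let e : Pl ≃ Fin (q ^ 2 + q + 1) :=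
    Fintype.equivFinOfCardEq (by rw [← Nat.card_eq_fintype_card]; exact hcard)
  let r : Fin (q ^ 2 + q + 1) → Fin (q ^ 2 + q + 1) → Prop :=
    fun i j => e.symm i ∈ e.symm j
  refine ⟨bipGraph r, fun i j => bipGraph_adj_ll i j, fun i j => bipGraph_adj_rr i j, ?_, ?_⟩
  · rintro (i | i)
    · let f : {l : Pl // e.symm i ∈ l} → ↥((bipGraph r).neighborSet (Sum.inl i)) :=
        fun l => ⟨Sum.inr (e l.1), by
          rw [SimpleGraph.mem_neighborSet, bipGraph_adj_lr]
          show e.symm i ∈ e.symm (e l.1)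
          rw [Equiv.symm_apply_apply]; exact l.2⟩
      have hf : Function.Bijective f := by
        constructor
        · intro l l' h
          exact Subtype.ext (e.injective (Sum.inr.inj (Subtype.ext_iff.mp h)))
        · rintro ⟨(a | a), hy⟩
          · exact absurd hy (bipGraph_adj_ll i a)
          · refine ⟨⟨e.symm a, (bipGraph_adj_lr i a).mp hy⟩, ?_⟩
            apply Subtype.ext
            show Sum.inr (e (e.symm a)) = Sum.inr a
            rw [Equiv.apply_symm_apply]
      calc ((bipGraph r).neighborSet (Sum.inl i)).ncard
          = Nat.card ↥((bipGraph r).neighborSet (Sum.inl i)) :=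
            (Nat.card_coe_set_eq _).symm
        _ = Nat.card {l : Pl // e.symm i ∈ l} :=
            (Nat.card_congr (Equiv.ofBijective f hf)).symm
        _ = q + 1 := hline (e.symm i)
    · let f : {p : Pl // p ∈ e.symm i} → ↥((bipGraph r).neighborSet (Sum.inr i)) :=
        fun p => ⟨Sum.inl (e p.1), by
          rw [SimpleGraph.mem_neighborSet, bipGraph_adj_rl]
          show e.symm (e p.1) ∈ e.symm i
          rw [Equiv.symm_apply_apply]; exact p.2⟩
      have hf : Function.Bijective f := by
        constructor
        · intro l l' h
          exact Subtype.ext (e.injective (Sum.inl.inj (Subtype.ext_iff.mp h)))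
        · rintro ⟨(a | a), hy⟩
          · refine ⟨⟨e.symm a, (bipGraph_adj_rl i a).mp hy⟩, ?_⟩
            apply Subtype.ext
            show Sum.inl (e (e.symm a)) = Sum.inl a
            rw [Equiv.apply_symm_apply]
          · exact absurd hy (bipGraph_adj_rr i a)
      calc ((bipGraph r).neighborSet (Sum.inr i)).ncard
          = Nat.card ↥((bipGraph r).neighborSet (Sum.inr i)) :=
            (Nat.card_coe_set_eq _).symm
        _ = Nat.card {p : Pl // p ∈ e.symm i} :=
            (Nat.card_congr (Equiv.ofBijective f hf)).symm
        _ = q + 1 := hpoint (e.symm i)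
  · rintro ⟨u, w, hc, hl⟩
    cases w with
    | nil => simp at hl
    | cons h1 w =>
      cases w with
      | nil => simp at hl
      | cons h2 w =>
        cases w with
        | nil => simp at hl
        | cons h3 w =>
          cases w with
          | nil => simp at hl
          | cons h4 w =>
            cases w with
            | cons h5 w => simp at hl
            | nil =>
              rename_i a b c
              have hn := hc.support_nodup
              simp [SimpleGraph.Walk.support_cons, List.nodup_cons] at hn
              -- hn should give the distinctness facts
              rcases u with i | i <;> rcases a with a | a <;>
                rcases b with b | b <;> rcases c with c | c <;>
                  simp only [bipGraph_adj_ll, bipGraph_adj_rr,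
                    bipGraph_adj_lr, bipGraph_adj_rl] at h1 h2 h3 h4
              · -- u = inl i, a = inr a, b = inl b, c = inr c
                rcases Nondegenerate.eq_or_eq (P := Pl) (L := Pl) h1 h2 h4 h3 with h | h
                · exact hn.2.1.2 (congrArg Sum.inl (e.symm.injective h).symm)
                · exact hn.1.2.1 (congrArg Sum.inr (e.symm.injective h))
              · -- u = inr i, a = inl a, b = inr b, c = inl c
                rcases Nondegenerate.eq_or_eq (P := Pl) (L := Pl) h1 h4 h2 h3 with h | h
                · exact hn.1.2.1 (congrArg Sum.inl (e.symm.injective h))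
                · exact hn.2.1.2 (congrArg Sum.inr (e.symm.injective h).symm)

/-- Reiman: for every prime power `q` there is a bipartite `(q+1)`-regular
`C₄`-free graph with both parts of size `q² + q + 1`. -/
theorem stmt_12 (q : ℕ) (hq : IsPrimePow q) :
    ∃ G : SimpleGraph (Fin (q ^ 2 + q + 1) ⊕ Fin (q ^ 2 + q + 1)),
      (∀ i j, ¬G.Adj (Sum.inl i) (Sum.inl j)) ∧
      (∀ i j, ¬G.Adj (Sum.inr i) (Sum.inr j)) ∧
      (∀ v, (G.neighborSet v).ncard = q + 1) ∧
      ¬ContainsCycleLen G 4 := by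
  obtain ⟨p, n, hp, hn, rfl⟩ := hq
  haveI : Fact p.Prime := ⟨Nat.prime_iff.mpr hp⟩
  have hc : Nat.card (GaloisField p n) = p ^ n := GaloisField.card p n hn.ne'
  rw [← hc]
  exact helper (GaloisField p n)
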